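/- arXiv:1704.07807 — 3 statements merged into one kernel-verified Lean document; each statement's English description precedes it below -/
import Mathlib

section
/- (Lemma 3.4, fundamental inequality.) Let (d*, z*) be a fixed point of the NIDS iteration with d* ∈ range(I − W), let x* be a minimizer over ℝ^{n×p} of x ↦ r(x) + ½‖x − z*‖²_{Λ⁻¹}, and let (d^{k+1}, z^{k+1}) be obtained from (d^k, z^k) by one NIDS iteration with intermediate point x^k, where d^k ∈ range(I − W). Then ‖z^{k+1} − z*‖²_{Λ⁻¹} + ‖d^{k+1} − d*‖²_M ≤ ‖z^k − z*‖²_{Λ⁻¹} + ‖d^k − d*‖²_M − ‖z^k − z^{k+1}‖²_{Λ⁻¹} − ‖d^k − d^{k+1}‖²_M + 2⟨∇s(x^k) − ∇s(x*), z^k − z^{k+1}⟩ − 2⟨x^k − x*, ∇s(x^k) − ∇s(x*)⟩. -/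
open Matrix Filter Topology

noncomputable section

/-- Trace inner product `⟨x, y⟩ = tr(xᵀ y)` on `n × p` real matrices. -/
def iprod {n p : ℕ} (x y : Matrix (Fin n) (Fin p) ℝ) : ℝ := (xᵀ * y).trace

/-- Weighted inner product `⟨x, y⟩_Q = tr(xᵀ Q y)`. -/
def iprodQ {n p : ℕ} (Q : Matrix (Fin n) (Fin n) ℝ) (x y : Matrix (Fin n) (Fin p) ℝ) : ℝ :=
  (xᵀ * Q * y).trace

/-- Weighted squared (semi)norm `‖x‖_Q² = tr(xᵀ Q x)`. -/
def nsq {n p : ℕ} (Q : Matrix (Fin n) (Fin n) ℝ) (x : Matrix (Fin n) (Fin p) ℝ) : ℝ :=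
  iprodQ Q x x

/-- `∇s(x)`: the matrix whose `i`-th row is the gradient field `g i` applied to the `i`-th
row of `x`. -/
def gradS {n p : ℕ} (g : Fin n → EuclideanSpace ℝ (Fin p) → EuclideanSpace ℝ (Fin p))
    (x : Matrix (Fin n) (Fin p) ℝ) : Matrix (Fin n) (Fin p) ℝ :=
  Matrix.of fun i => WithLp.equiv 2 (Fin p → ℝ) (g i ((WithLp.equiv 2 (Fin p → ℝ)).symm (x i)))

/-- `x ∈ range(A)`, i.e. `x = A y` for some `y ∈ ℝ^{n×p}`. -/
def InRange {n p : ℕ} (A : Matrix (Fin n) (Fin n) ℝ) (x : Matrix (Fin n) (Fin p) ℝ) : Prop :=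
  ∃ y : Matrix (Fin n) (Fin p) ℝ, x = A * y

/-- `B` is the Moore–Penrose pseudoinverse of `A`. -/
def IsMoorePenrose {n : ℕ} (A B : Matrix (Fin n) (Fin n) ℝ) : Prop :=
  A * B * A = A ∧ B * A * B = B ∧ (A * B)ᵀ = A * B ∧ (B * A)ᵀ = B * A

/-- `r(x) = Σᵢ rᵢ(xᵢ)` where `xᵢ` is the `i`-th row of `x`. -/
def rsum {n p : ℕ} (r : Fin n → (Fin p → ℝ) → ℝ) (x : Matrix (Fin n) (Fin p) ℝ) : ℝ :=
  ∑ i, r i (x i)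

/-- `q ∈ ∂r(x)`: subgradient of `rsum r` at `x` w.r.t. the trace inner product. -/
def IsSubgrad {n p : ℕ} (r : Fin n → (Fin p → ℝ) → ℝ) (x q : Matrix (Fin n) (Fin p) ℝ) : Prop :=
  ∀ y : Matrix (Fin n) (Fin p) ℝ, rsum r x + iprod q (y - x) ≤ rsum r y

/-- `t` is an eigenvalue of the real matrix `A`. -/
def IsEig {n : ℕ} (A : Matrix (Fin n) (Fin n) ℝ) (t : ℝ) : Prop :=
  ∃ v : Fin n → ℝ, v ≠ 0 ∧ A *ᵥ v = t • v

/-- The mixing matrix assumption: symmetry, null space of `I - W` is the span of the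
all-ones vector, and `2I ≽ W + I ≻ 0`. -/
def IsMixing {n : ℕ} (W : Matrix (Fin n) (Fin n) ℝ) : Prop :=
  Wᵀ = W ∧ (∀ v : Fin n → ℝ, (1 - W) *ᵥ v = 0 ↔ ∃ t : ℝ, v = fun _ => t) ∧
    (W + 1).PosDef ∧ ((2 : ℝ) • (1 : Matrix (Fin n) (Fin n) ℝ) - (W + 1)).PosSemidef

/-- `x` is a minimizer over `ℝ^{n×p}` of `u ↦ r(u) + ½‖u − z‖²_{Λ⁻¹}` where `Λ = diag α`. -/
def ProxMin {n p : ℕ} (r : Fin n → (Fin p → ℝ) → ℝ) (α : Fin n → ℝ)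
    (z x : Matrix (Fin n) (Fin p) ℝ) : Prop :=
  ∀ u : Matrix (Fin n) (Fin p) ℝ,
    rsum r x + 1 / 2 * nsq (Matrix.diagonal fun i => (α i)⁻¹) (x - z) ≤
      rsum r u + 1 / 2 * nsq (Matrix.diagonal fun i => (α i)⁻¹) (u - z)

/-- `(d, z)` is a fixed point of the NIDS iteration. -/
def NIDSFixed {n p : ℕ} (W : Matrix (Fin n) (Fin n) ℝ) (α : Fin n → ℝ) (c : ℝ)
    (g : Fin n → EuclideanSpace ℝ (Fin p) → EuclideanSpace ℝ (Fin p))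
    (r : Fin n → (Fin p → ℝ) → ℝ) (d z : Matrix (Fin n) (Fin p) ℝ) : Prop :=
  ∃ x : Matrix (Fin n) (Fin p) ℝ, ProxMin r α z x ∧
    d = d + c • ((1 - W) *
      ((2 : ℝ) • x - z - Matrix.diagonal α * gradS g x - Matrix.diagonal α * d)) ∧
    z = x - Matrix.diagonal α * gradS g x - Matrix.diagonal α * d

end

section nids_helpers
open Matrix
variable {n p : ℕ}

lemma iprod_comm (x y : Matrix (Fin n) (Fin p) ℝ) : iprod x y = iprod y x := by
  unfold iprod
  rw [← Matrix.trace_transpose, Matrix.transpose_mul, Matrix.transpose_transpose]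

lemma iprod_mul_left (Q : Matrix (Fin n) (Fin n) ℝ) (x y : Matrix (Fin n) (Fin p) ℝ) :
    iprod (Q * x) y = iprod x (Qᵀ * y) := by
  unfold iprod
  rw [Matrix.transpose_mul, Matrix.mul_assoc]

lemma iprod_add_left (x y z : Matrix (Fin n) (Fin p) ℝ) :
    iprod (x + y) z = iprod x z + iprod y z := by
  unfold iprod
  rw [Matrix.transpose_add, Matrix.add_mul, Matrix.trace_add]

lemma iprod_sub_left (x y z : Matrix (Fin n) (Fin p) ℝ) :
    iprod (x - y) z = iprod x z - iprod y z := by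
  unfold iprod
  rw [Matrix.transpose_sub, Matrix.sub_mul, Matrix.trace_sub]

lemma iprod_add_right (x y z : Matrix (Fin n) (Fin p) ℝ) :
    iprod x (y + z) = iprod x y + iprod x z := by
  unfold iprod
  rw [Matrix.mul_add, Matrix.trace_add]

lemma iprod_sub_right (x y z : Matrix (Fin n) (Fin p) ℝ) :
    iprod x (y - z) = iprod x y - iprod x z := by
  unfold iprod
  rw [Matrix.mul_sub, Matrix.trace_sub]

lemma iprod_smul_left (a : ℝ) (x y : Matrix (Fin n) (Fin p) ℝ) :
    iprod (a • x) y = a * iprod x y := by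
  unfold iprod
  rw [Matrix.transpose_smul, Matrix.smul_mul, Matrix.trace_smul, smul_eq_mul]

lemma iprod_smul_right (a : ℝ) (x y : Matrix (Fin n) (Fin p) ℝ) :
    iprod x (a • y) = a * iprod x y := by
  unfold iprod
  rw [Matrix.mul_smul, Matrix.trace_smul, smul_eq_mul]

lemma iprod_zero_right (x : Matrix (Fin n) (Fin p) ℝ) : iprod x (0 : Matrix (Fin n) (Fin p) ℝ) = 0 := by
  unfold iprod
  simp

lemma iprod_neg_right (x y : Matrix (Fin n) (Fin p) ℝ) : iprod x (-y) = -iprod x y := by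
  unfold iprod
  rw [Matrix.mul_neg, Matrix.trace_neg]

lemma iprod_symm_mul {Q : Matrix (Fin n) (Fin n) ℝ} (hQ : Qᵀ = Q)
    (x y : Matrix (Fin n) (Fin p) ℝ) : iprod x (Q * y) = iprod y (Q * x) := by
  rw [← hQ, ← iprod_mul_left, iprod_comm, hQ]

lemma nsq_eq (Q : Matrix (Fin n) (Fin n) ℝ) (x : Matrix (Fin n) (Fin p) ℝ) :
    nsq Q x = iprod x (Q * x) := by
  unfold nsq iprodQ iprod
  rw [Matrix.mul_assoc]

lemma three_point' (Q : Matrix (Fin n) (Fin n) ℝ) (u v w : Matrix (Fin n) (Fin p) ℝ) :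
    nsq Q (u - w) - nsq Q (v - w) + nsq Q (v - u) =
      iprod (u - w) (Q * (u - v)) + iprod (u - v) (Q * (u - w)) := by
  simp only [nsq_eq, Matrix.mul_sub, iprod_sub_left, iprod_sub_right]
  ring

lemma key1 {A B : Matrix (Fin n) (Fin n) ℝ} (hA : Aᵀ = A) (hABA : A * B * A = A)
    (s w : Matrix (Fin n) (Fin p) ℝ) :
    iprod (A * s) (B * (A * w)) = iprod (A * s) w := by
  unfold iprod
  rw [Matrix.transpose_mul, hA]
  congr 1
  have h2 : A * (B * (A * w)) = A * w := by
    rw [← Matrix.mul_assoc, ← Matrix.mul_assoc, hABA]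
  simp only [Matrix.mul_assoc, h2]

lemma nsq_diag_nonneg {v : Fin n → ℝ} (hv : ∀ i, 0 ≤ v i) (m : Matrix (Fin n) (Fin p) ℝ) :
    0 ≤ nsq (Matrix.diagonal v) m := by
  unfold nsq iprodQ
  rw [Matrix.mul_assoc]
  apply Finset.sum_nonneg
  intro j _
  rw [Matrix.diag_apply, Matrix.mul_apply]
  apply Finset.sum_nonneg
  intro i _
  simp only [Matrix.transpose_apply, Matrix.diagonal_mul]
  have := hv i
  nlinarith [sq_nonneg (m i j)]

lemma prox_subgrad {r : Fin n → (Fin p → ℝ) → ℝ} {α : Fin n → ℝ}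
    {z x : Matrix (Fin n) (Fin p) ℝ}
    (hr : ∀ i, ConvexOn ℝ Set.univ (r i)) (hα : ∀ i, 0 < α i)
    (hx : ProxMin r α z x) (u : Matrix (Fin n) (Fin p) ℝ) :
    rsum r x + iprod (u - x) ((Matrix.diagonal fun i => (α i)⁻¹) * (z - x)) ≤ rsum r u := by
  set N : Matrix (Fin n) (Fin n) ℝ := Matrix.diagonal fun i => (α i)⁻¹ with hNdef
  have hN : Nᵀ = N := Matrix.diagonal_transpose _
  set C : ℝ := iprod (u - x) (N * (x - z)) with hC
  set D : ℝ := nsq N (u - x) with hD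
  have hD0 : 0 ≤ D := nsq_diag_nonneg (fun i => le_of_lt (inv_pos.mpr (hα i))) _
  have key : ∀ t : ℝ, 0 < t → t ≤ 1 →
      0 ≤ (rsum r u - rsum r x + C) + t / 2 * D := by
    intro t ht0 ht1
    have hmin := hx (x + t • (u - x))
    have hconv : rsum r (x + t • (u - x)) ≤ (1 - t) * rsum r x + t * rsum r u := by
      unfold rsum
      rw [Finset.mul_sum, Finset.mul_sum, ← Finset.sum_add_distrib]
      apply Finset.sum_le_sum
      intro i _
      have hrow : (x + t • (u - x)) i = (1 - t) • (x i) + t • (u i) := by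
        funext j
        simp [Matrix.add_apply, Matrix.smul_apply, Matrix.sub_apply]
        ring
      rw [hrow]
      have := (hr i).2 (Set.mem_univ (x i)) (Set.mem_univ (u i))
        (by linarith : (0:ℝ) ≤ 1 - t) (le_of_lt ht0) (by ring)
      simpa [smul_eq_mul] using this
    have hquad : nsq N (x + t • (u - x) - z) = nsq N (x - z) + 2 * t * C + t ^ 2 * D := by
      have harg : x + t • (u - x) - z = (x - z) + t • (u - x) := by
        rw [add_sub_right_comm]
      rw [harg]
      simp only [nsq_eq, Matrix.mul_add, Matrix.mul_smul, iprod_add_left, iprod_add_right,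
        iprod_smul_left, iprod_smul_right]
      have hsw : iprod (u - x) (N * (x - z)) = iprod (x - z) (N * (u - x)) :=
        iprod_symm_mul hN _ _
      rw [hC, hD, nsq_eq, ← hsw]
      ring
    rw [hquad] at hmin
    nlinarith [hmin, hconv]
  have hA : 0 ≤ rsum r u - rsum r x + C := by
    by_contra h
    push_neg at h
    set A : ℝ := rsum r u - rsum r x + C with hAdef
    have hA0 : A < 0 := h
    have ht0 : 0 < min 1 (-A / (D + 1)) := by
      apply lt_min one_pos
      apply div_pos (by linarith) (by linarith)
    have ht1 : min 1 (-A / (D + 1)) ≤ 1 := min_le_left _ _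
    have hkey := key _ ht0 ht1
    have htD : min 1 (-A / (D + 1)) * (D + 1) ≤ -A := by
      have h1 : min 1 (-A / (D + 1)) ≤ -A / (D + 1) := min_le_right _ _
      have h2 : (0:ℝ) < D + 1 := by linarith
      calc min 1 (-A / (D + 1)) * (D + 1) ≤ (-A / (D + 1)) * (D + 1) := by
            apply mul_le_mul_of_nonneg_right h1 (le_of_lt h2)
        _ = -A := by field_simp
    nlinarith [hkey, htD, ht0, hD0]
  have : iprod (u - x) (N * (z - x)) = -C := by
    have e : z - x = (-1 : ℝ) • (x - z) := by simp
    rw [hC, e, Matrix.mul_smul, iprod_smul_right]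
    ring
  rw [this]
  linarith

lemma prox_mono {r : Fin n → (Fin p → ℝ) → ℝ} {α : Fin n → ℝ}
    {zk xk zs xs : Matrix (Fin n) (Fin p) ℝ}
    (hr : ∀ i, ConvexOn ℝ Set.univ (r i)) (hα : ∀ i, 0 < α i)
    (h1 : ProxMin r α zk xk) (h2 : ProxMin r α zs xs) :
    0 ≤ iprod (xk - xs) ((Matrix.diagonal fun i => (α i)⁻¹) * ((zk - xk) - (zs - xs))) := by
  have ha := prox_subgrad hr hα h1 xs
  have hb := prox_subgrad hr hα h2 xk
  set N : Matrix (Fin n) (Fin n) ℝ := Matrix.diagonal fun i => (α i)⁻¹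
  have hflip : iprod (xs - xk) (N * (zk - xk)) = -iprod (xk - xs) (N * (zk - xk)) := by
    rw [show xs - xk = (-1 : ℝ) • (xk - xs) by simp, iprod_smul_left]; ring
  rw [Matrix.mul_sub, iprod_sub_right]
  rw [hflip] at ha
  linarith

lemma nids_main_aux (A B L N : Matrix (Fin n) (Fin n) ℝ) (c : ℝ) (hc : c ≠ 0)
    (hAT : Aᵀ = A) (hLT : Lᵀ = L) (hNT : Nᵀ = N) (hNL : N * L = 1)
    (hABA : A * B * A = A)
    (Gk Gs dk zk xk dk1 zk1 dstar zstar xstar : Matrix (Fin n) (Fin p) ℝ)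
    (hdu : dk1 = dk + c • (A * ((2:ℝ) • xk - zk - L * Gk - L * dk)))
    (hzu : zk1 = xk - L * Gk - L * dk1)
    (hdk : ∃ y : Matrix (Fin n) (Fin p) ℝ, dk = A * y)
      (hdstar : ∃ y : Matrix (Fin n) (Fin p) ℝ, dstar = A * y)
    (hfix1 : dstar = dstar + c • (A * ((2:ℝ) • xstar - zstar - L * Gs - L * dstar)))
    (hfix2 : zstar = xstar - L * Gs - L * dstar)
    (hP : 0 ≤ iprod (xk - xstar) (N * ((zk - xk) - (zstar - xstar)))) :
    nsq N (zk1 - zstar) + nsq (c⁻¹ • B - L) (dk1 - dstar) ≤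
      nsq N (zk - zstar) + nsq (c⁻¹ • B - L) (dk - dstar)
        - nsq N (zk - zk1) - nsq (c⁻¹ • B - L) (dk - dk1)
        + 2 * iprod (Gk - Gs) (zk - zk1) - 2 * iprod (xk - xstar) (Gk - Gs) := by
  -- fixed point: A * xstar = 0
  have hE : c • (A * ((2:ℝ) • xstar - zstar - L * Gs - L * dstar)) = 0 :=
    (left_eq_add.mp hfix1)
  have hv : (2:ℝ) • xstar - zstar - L * Gs - L * dstar = xstar := by
    rw [hfix2, two_smul]; abel
  have hAx : A * xstar = 0 := by
    rw [hv] at hE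
    rcases smul_eq_zero.mp hE with h | h
    · exact absurd h hc
    · exact h
  have hF2 : zk1 - zstar = (xk - xstar) - L * (Gk - Gs) - L * (dk1 - dstar) := by
    rw [hzu, hfix2, Matrix.mul_sub, Matrix.mul_sub]; abel
  have hvarg : xk - zk + zk1 + L * (dk1 - dk) = (2:ℝ) • xk - zk - L * Gk - L * dk := by
    rw [hzu, Matrix.mul_sub, two_smul]; abel
  have hF3 : dk1 - dk = c • (A * (xk - zk + zk1 + L * (dk1 - dk))) := by
    rw [hvarg, hdu]; abel
  obtain ⟨yk, hyk⟩ := hdk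
  obtain ⟨ys, hys⟩ := hdstar
  have hdd : dk1 - dstar =
      A * (yk + c • ((2:ℝ) • xk - zk - L * Gk - L * dk) - ys) := by
    rw [hdu, hyk, hys]
    simp only [Matrix.mul_add, Matrix.mul_sub, Matrix.mul_smul]
  have hδd : dk1 - dk = A * (c • (xk - zk + zk1 + L * (dk1 - dk))) := by
    rw [Matrix.mul_smul]; exact hF3
  have h_B1 : iprod (dk1 - dstar) (B * (dk1 - dk)) =
      c * iprod (dk1 - dstar) (xk - zk + zk1 + L * (dk1 - dk)) := by
    have h := key1 hAT hABA (yk + c • ((2:ℝ) • xk - zk - L * Gk - L * dk) - ys)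
      (c • (xk - zk + zk1 + L * (dk1 - dk)))
    rw [← hdd, ← hδd, iprod_smul_right] at h
    exact h
  have h_B2 : iprod (dk1 - dk) (B * (dk1 - dstar)) =
      c * iprod (dk1 - dstar) (xk - zk + zk1 + L * (dk1 - dk)) := by
    have h := key1 hAT hABA (c • (xk - zk + zk1 + L * (dk1 - dk)))
      (yk + c • ((2:ℝ) • xk - zk - L * Gk - L * dk) - ys)
    have h2 : iprod (A * (c • (xk - zk + zk1 + L * (dk1 - dk))))
        (yk + c • ((2:ℝ) • xk - zk - L * Gk - L * dk) - ys) =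
        c * iprod (dk1 - dstar) (xk - zk + zk1 + L * (dk1 - dk)) := by
      rw [iprod_mul_left, hAT, ← hdd, iprod_smul_left,
        iprod_comm (xk - zk + zk1 + L * (dk1 - dk))]
    rw [h2] at h
    rw [← hδd, ← hdd] at h
    exact h
  have h_a : iprod (dk1 - dstar) ((c⁻¹ • B - L) * (dk1 - dk)) =
      iprod (dk1 - dstar) (xk - zk + zk1) := by
    rw [Matrix.sub_mul, Matrix.smul_mul, iprod_sub_right, iprod_smul_right, h_B1,
      iprod_add_right, ← mul_assoc, inv_mul_cancel₀ hc, one_mul]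
    ring
  have h_b : iprod (dk1 - dk) ((c⁻¹ • B - L) * (dk1 - dstar)) =
      iprod (dk1 - dstar) (xk - zk + zk1) := by
    rw [Matrix.sub_mul, Matrix.smul_mul, iprod_sub_right, iprod_smul_right, h_B2,
      iprod_symm_mul hLT, iprod_add_right, ← mul_assoc, inv_mul_cancel₀ hc, one_mul]
    ring
  have hzz : iprod (zk1 - zstar) (N * (zk1 - zk)) = iprod (zk1 - zk) (N * (zk1 - zstar)) :=
    iprod_symm_mul hNT _ _
  have hNz : N * (zk1 - zstar) = N * (xk - xstar) - (Gk - Gs) - (dk1 - dstar) := by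
    rw [hF2, Matrix.mul_sub, Matrix.mul_sub, ← Matrix.mul_assoc, ← Matrix.mul_assoc, hNL]
    simp only [Matrix.one_mul]
  have h_c : iprod (zk1 - zk) (N * (zk1 - zstar)) =
      iprod (zk1 - zk) (N * (xk - xstar)) - iprod (zk1 - zk) (Gk - Gs)
        - iprod (zk1 - zk) (dk1 - dstar) := by
    rw [hNz, iprod_sub_right, iprod_sub_right]
  have h4 : iprod (zk1 - zk) (Gk - Gs) = -iprod (Gk - Gs) (zk - zk1) := by
    rw [iprod_comm, show zk1 - zk = (-1:ℝ) • (zk - zk1) by simp, iprod_smul_right]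
    ring
  have h_e0 : iprod (dk1 - dstar) xstar = 0 := by
    rw [hdd, iprod_mul_left, hAT, hAx, iprod_zero_right]
  have h5 : iprod (dk1 - dstar) (xk - zk + zk1) - iprod (dk1 - dstar) (zk1 - zk) =
      iprod (dk1 - dstar) xk := by
    rw [← iprod_sub_right]
    congr 1
    abel
  have h5' : iprod (zk1 - zk) (dk1 - dstar) = iprod (dk1 - dstar) (zk1 - zk) :=
    iprod_comm _ _
  have h6 : iprod (dk1 - dstar) (xk - xstar) = iprod (dk1 - dstar) xk := by
    rw [iprod_sub_right, h_e0, sub_zero]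
  have h_f : N * ((xk - xstar) - (zk1 - zstar)) = (Gk - Gs) + (dk1 - dstar) := by
    have e : (xk - xstar) - (zk1 - zstar) = L * (Gk - Gs) + L * (dk1 - dstar) := by
      rw [hF2]; abel
    rw [e, Matrix.mul_add, ← Matrix.mul_assoc, ← Matrix.mul_assoc, hNL]
    simp only [Matrix.one_mul]
  have h7 : iprod (dk1 - dstar) (xk - xstar) + iprod (xk - xstar) (Gk - Gs) =
      iprod (xk - xstar) (N * ((xk - xstar) - (zk1 - zstar))) := by
    rw [h_f, iprod_add_right, iprod_comm (dk1 - dstar) (xk - xstar)]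
    ring
  have h8 : iprod (zk1 - zk) (N * (xk - xstar)) = iprod (xk - xstar) (N * (zk1 - zk)) :=
    iprod_symm_mul hNT _ _
  have h9 : iprod (xk - xstar) (N * (zk1 - zk)) +
      iprod (xk - xstar) (N * ((xk - xstar) - (zk1 - zstar))) =
      iprod (xk - xstar) (N * ((xk - xstar) - (zk - zstar))) := by
    have e : N * (zk1 - zk) + N * ((xk - xstar) - (zk1 - zstar)) =
        N * ((xk - xstar) - (zk - zstar)) := by
      rw [← Matrix.mul_add]
      congr 1
      abel
    rw [← iprod_add_right, e]
  have h10 : iprod (xk - xstar) (N * ((xk - xstar) - (zk - zstar))) =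
      -iprod (xk - xstar) (N * ((zk - xk) - (zstar - xstar))) := by
    have e : (xk - xstar) - (zk - zstar) = -((zk - xk) - (zstar - xstar)) := by abel
    rw [e, Matrix.mul_neg, iprod_neg_right]
  have E1 := three_point' N zk1 zk zstar
  have E2 := three_point' (c⁻¹ • B - L) dk1 dk dstar
  linarith [E1, E2, hzz, h_c, h4, h5, h5', h6, h7, h8, h9, h10, h_a, h_b, hP]

end nids_helpers

/-- Lemma 3.4: the fundamental inequality of NIDS. -/
theorem nids_fundamental_inequality
    {n p : ℕ}
    (W : Matrix (Fin n) (Fin n) ℝ) (hW : IsMixing W)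
    (α : Fin n → ℝ) (hα : ∀ i, 0 < α i) (c : ℝ) (hc : 0 < c)
    (hcW : ((1 : Matrix (Fin n) (Fin n) ℝ) -
      c • ((Matrix.diagonal fun i => Real.sqrt (α i)) * (1 - W) *
        Matrix.diagonal fun i => Real.sqrt (α i))).PosDef)
    (B : Matrix (Fin n) (Fin n) ℝ) (hB : IsMoorePenrose (1 - W) B)
    (s : Fin n → EuclideanSpace ℝ (Fin p) → ℝ)
    (g : Fin n → EuclideanSpace ℝ (Fin p) → EuclideanSpace ℝ (Fin p))
    (hs : ∀ i, ConvexOn ℝ Set.univ (s i))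
    (hg : ∀ i v, HasGradientAt (s i) (g i v) v)
    (r : Fin n → (Fin p → ℝ) → ℝ) (hr : ∀ i, ConvexOn ℝ Set.univ (r i))
    (dk zk xk dk1 zk1 : Matrix (Fin n) (Fin p) ℝ)
    (hxk : ProxMin r α zk xk)
    (hdu : dk1 = dk + c • ((1 - W) *
      ((2 : ℝ) • xk - zk - Matrix.diagonal α * gradS g xk - Matrix.diagonal α * dk)))
    (hzu : zk1 = xk - Matrix.diagonal α * gradS g xk - Matrix.diagonal α * dk1)
    (hdk : InRange (1 - W) dk)
    (dstar zstar xstar : Matrix (Fin n) (Fin p) ℝ)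
    (hxstar : ProxMin r α zstar xstar)
    (hfix1 : dstar = dstar + c • ((1 - W) * ((2 : ℝ) • xstar - zstar -
      Matrix.diagonal α * gradS g xstar - Matrix.diagonal α * dstar)))
    (hfix2 : zstar = xstar - Matrix.diagonal α * gradS g xstar - Matrix.diagonal α * dstar)
    (hdstar : InRange (1 - W) dstar) :
    nsq (Matrix.diagonal fun i => (α i)⁻¹) (zk1 - zstar) +
        nsq (c⁻¹ • B - Matrix.diagonal α) (dk1 - dstar) ≤
      nsq (Matrix.diagonal fun i => (α i)⁻¹) (zk - zstar) +
        nsq (c⁻¹ • B - Matrix.diagonal α) (dk - dstar) -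
        nsq (Matrix.diagonal fun i => (α i)⁻¹) (zk - zk1) -
        nsq (c⁻¹ • B - Matrix.diagonal α) (dk - dk1) +
        2 * iprod (gradS g xk - gradS g xstar) (zk - zk1) -
        2 * iprod (xk - xstar) (gradS g xk - gradS g xstar) := by
  have hAT : ((1 : Matrix (Fin n) (Fin n) ℝ) - W)ᵀ = 1 - W := by
    rw [Matrix.transpose_sub, Matrix.transpose_one, hW.1]
  have hNL : (Matrix.diagonal fun i => (α i)⁻¹) * Matrix.diagonal α = 1 := by
    rw [Matrix.diagonal_mul_diagonal]
    have e : (fun i => (α i)⁻¹ * α i) = fun _ : Fin n => (1:ℝ) :=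
      funext fun i => inv_mul_cancel₀ (hα i).ne'
    rw [e, Matrix.diagonal_one]
  have hP := prox_mono hr hα hxk hxstar
  exact nids_main_aux (1 - W) B (Matrix.diagonal α) (Matrix.diagonal fun i => (α i)⁻¹) c
    hc.ne' hAT (Matrix.diagonal_transpose _) (Matrix.diagonal_transpose _) hNL hB.1
    (gradS g xk) (gradS g xstar) dk zk xk dk1 zk1 dstar zstar xstar
    hdu hzu hdk hdstar hfix1 hfix2 hP
end

section
/- (Lemma 3.5, key inequality of descent.) Suppose each s_i has L_i-Lipschitz continuous gradient. Let (d*, z*) be a fixed point of the NIDS iteration with d* ∈ range(I − W), and let (d^{k+1}, z^{k+1}) be obtained from (d^k, z^k) by one NIDS iteration, where d^k ∈ range(I − W). Then ‖z^{k+1} − z*‖²_{Λ⁻¹} + ‖d^{k+1} − d*‖²_M ≤ ‖z^k − z*‖²_{Λ⁻¹} + ‖d^k − d*‖²_M − (1 − max_i α_i L_i / 2) · ( ‖z^k − z^{k+1}‖²_{Λ⁻¹} + ‖d^k − d^{k+1}‖²_M ). -/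
open Matrix Filter Topology

namespace NIDSAux
open Matrix Filter Topology
variable {n p : ℕ}

lemma iprod_def (x y : Matrix (Fin n) (Fin p) ℝ) :
    iprod x y = ∑ i, ∑ j, x i j * y i j := by
  unfold iprod Matrix.trace
  simp only [Matrix.diag_apply, Matrix.mul_apply, Matrix.transpose_apply]
  exact Finset.sum_comm

lemma iprod_comm (x y : Matrix (Fin n) (Fin p) ℝ) : iprod x y = iprod y x := by
  simp only [iprod_def, mul_comm]

lemma iprod_add_right (x y z : Matrix (Fin n) (Fin p) ℝ) :
    iprod x (y + z) = iprod x y + iprod x z := by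
  simp only [iprod_def, Matrix.add_apply, mul_add, Finset.sum_add_distrib]

lemma iprod_sub_right (x y z : Matrix (Fin n) (Fin p) ℝ) :
    iprod x (y - z) = iprod x y - iprod x z := by
  simp only [iprod_def, Matrix.sub_apply, mul_sub, Finset.sum_sub_distrib]

lemma iprod_smul_right (t : ℝ) (x y : Matrix (Fin n) (Fin p) ℝ) :
    iprod x (t • y) = t * iprod x y := by
  simp only [iprod_def, Matrix.smul_apply, smul_eq_mul, Finset.mul_sum]
  exact Finset.sum_congr rfl fun i _ => Finset.sum_congr rfl fun j _ => by ring

lemma iprod_neg_right (x y : Matrix (Fin n) (Fin p) ℝ) :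
    iprod x (-y) = -iprod x y := by
  simp only [iprod_def, Matrix.neg_apply, mul_neg, Finset.sum_neg_distrib]

lemma iprod_zero_right (x : Matrix (Fin n) (Fin p) ℝ) :
    iprod x (0 : Matrix (Fin n) (Fin p) ℝ) = 0 := by
  simp [iprod_def]

lemma iprod_add_left (x y z : Matrix (Fin n) (Fin p) ℝ) :
    iprod (x + y) z = iprod x z + iprod y z := by
  rw [iprod_comm, iprod_add_right, iprod_comm z x, iprod_comm z y]

lemma iprod_sub_left (x y z : Matrix (Fin n) (Fin p) ℝ) :
    iprod (x - y) z = iprod x z - iprod y z := by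
  rw [iprod_comm, iprod_sub_right, iprod_comm z x, iprod_comm z y]

lemma iprod_mul_right (N : Matrix (Fin n) (Fin n) ℝ) (x y : Matrix (Fin n) (Fin p) ℝ) :
    iprod x (N * y) = iprod (Nᵀ * x) y := by
  unfold iprod
  rw [Matrix.transpose_mul, Matrix.transpose_transpose, Matrix.mul_assoc]

lemma iprodQ_eq (Q : Matrix (Fin n) (Fin n) ℝ) (x y : Matrix (Fin n) (Fin p) ℝ) :
    iprodQ Q x y = iprod x (Q * y) := by
  unfold iprodQ iprod; rw [Matrix.mul_assoc]

lemma iprodQ_comm {Q : Matrix (Fin n) (Fin n) ℝ} (hQ : Qᵀ = Q)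
    (x y : Matrix (Fin n) (Fin p) ℝ) : iprodQ Q x y = iprodQ Q y x := by
  unfold iprodQ
  rw [← Matrix.trace_transpose, Matrix.transpose_mul, Matrix.transpose_mul,
    Matrix.transpose_transpose, hQ, Matrix.mul_assoc]

lemma nsq_add {Q : Matrix (Fin n) (Fin n) ℝ} (hQ : Qᵀ = Q)
    (a b : Matrix (Fin n) (Fin p) ℝ) :
    nsq Q (a + b) = nsq Q a + 2 * iprodQ Q a b + nsq Q b := by
  unfold nsq
  rw [iprodQ_eq, iprodQ_eq, iprodQ_eq, iprodQ_eq, Matrix.mul_add, iprod_add_right,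
    iprod_add_left, iprod_add_left]
  have : iprod b (Q * a) = iprod a (Q * b) := by
    rw [← iprodQ_eq, ← iprodQ_eq, iprodQ_comm hQ]
  linarith

lemma nsq_add_smul {Q : Matrix (Fin n) (Fin n) ℝ} (hQ : Qᵀ = Q) (t : ℝ)
    (a b : Matrix (Fin n) (Fin p) ℝ) :
    nsq Q (a + t • b) = nsq Q a + 2 * t * iprodQ Q a b + t ^ 2 * nsq Q b := by
  rw [nsq_add hQ]
  have h1 : iprodQ Q a (t • b) = t * iprodQ Q a b := by
    rw [iprodQ_eq, Matrix.mul_smul, iprod_smul_right, iprodQ_eq]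
  have h2 : nsq Q (t • b) = t ^ 2 * nsq Q b := by
    unfold nsq
    rw [iprodQ_eq, Matrix.mul_smul, iprod_smul_right, iprod_comm, iprod_smul_right,
      iprod_comm, ← iprodQ_eq]
    ring
  rw [h1, h2]; ring

lemma nsq_diagonal (w : Fin n → ℝ) (x : Matrix (Fin n) (Fin p) ℝ) :
    nsq (Matrix.diagonal w) x = ∑ i, w i * ∑ j, (x i j) ^ 2 := by
  unfold nsq
  rw [iprodQ_eq, iprod_def]
  refine Finset.sum_congr rfl fun i _ => ?_
  rw [Finset.mul_sum]
  refine Finset.sum_congr rfl fun j _ => ?_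
  simp only [Matrix.diagonal_mul]
  ring

lemma nsq_diagonal_nonneg {w : Fin n → ℝ} (hw : ∀ i, 0 ≤ w i)
    (x : Matrix (Fin n) (Fin p) ℝ) : 0 ≤ nsq (Matrix.diagonal w) x := by
  rw [nsq_diagonal]
  exact Finset.sum_nonneg fun i _ => mul_nonneg (hw i) (Finset.sum_nonneg fun j _ => sq_nonneg _)

lemma iprod_col (N : Matrix (Fin n) (Fin n) ℝ) (x y : Matrix (Fin n) (Fin p) ℝ) :
    iprod x (N * y) = ∑ j, dotProduct (fun i => x i j) (N *ᵥ fun i => y i j) := by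
  rw [iprod_def, Finset.sum_comm]
  refine Finset.sum_congr rfl fun j _ => ?_
  simp only [dotProduct, Matrix.mulVec, Matrix.mul_apply]

lemma psd_iprod {N : Matrix (Fin n) (Fin n) ℝ} (hN : N.PosSemidef)
    (u : Matrix (Fin n) (Fin p) ℝ) : 0 ≤ iprod u (N * u) := by
  rw [iprod_col]
  refine Finset.sum_nonneg fun j _ => ?_
  have := hN.dotProduct_mulVec_nonneg (fun i => u i j)
  simpa using this

lemma young (t a b : ℝ) (ht : 0 < t) : 2 * a * b ≤ t * a ^ 2 + t⁻¹ * b ^ 2 := by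
  have h2 : t * t⁻¹ = 1 := mul_inv_cancel₀ (ne_of_gt ht)
  have h1 : t * (t * a ^ 2 + t⁻¹ * b ^ 2 - 2 * a * b) =
      (t * a - b) ^ 2 + (t * t⁻¹ - 1) * b ^ 2 := by ring
  have h3 : 0 ≤ t * (t * a ^ 2 + t⁻¹ * b ^ 2 - 2 * a * b) := by
    rw [h1, h2]
    nlinarith [sq_nonneg (t * a - b)]
  nlinarith [h3, ht]

section Analysis
variable {E : Type*} [NormedAddCommGroup E] [InnerProductSpace ℝ E] [CompleteSpace E]

lemma nids_line_deriv (s : E → ℝ) (g : E → E) (hg : ∀ v, HasGradientAt s (g v) v)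
    (x y : E) (t : ℝ) :
    HasDerivAt (fun t : ℝ => s (x + t • (y - x)))
      (inner ℝ (g (x + t • (y - x))) (y - x) : ℝ) t := by
  have hline : HasDerivAt (fun t : ℝ => x + t • (y - x)) (y - x) t := by
    simpa using ((hasDerivAt_id t).smul_const (y - x)).const_add x
  have h1 := (hg (x + t • (y - x))).hasFDerivAt
  have h2 := h1.comp_hasDerivAt t hline
  exact h2

lemma nids_first_order (s : E → ℝ) (g : E → E) (hs : ConvexOn ℝ Set.univ s)
    (hg : ∀ v, HasGradientAt s (g v) v) (x u : E) :
    s x + (inner ℝ (g x) (u - x) : ℝ) ≤ s u := by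
  set f : ℝ → ℝ := fun t => s (x + t • (u - x)) with hf
  have hf0 : f 0 = s x := by simp [hf]
  have hd : HasDerivAt f (inner ℝ (g x) (u - x) : ℝ) 0 := by
    simpa using nids_line_deriv s g hg x u 0
  have hslope : Tendsto (slope f 0) (𝓝[>] 0) (𝓝 (inner ℝ (g x) (u - x) : ℝ)) :=
    (hasDerivAt_iff_tendsto_slope.mp hd).mono_left
      (nhdsWithin_mono 0 (fun t ht => ne_of_gt ht))
  have hev : ∀ᶠ t in 𝓝[>] (0:ℝ), slope f 0 t ≤ s u - s x := by
    filter_upwards [Ioo_mem_nhdsGT_of_mem (Set.mem_Ico.mpr ⟨le_refl (0:ℝ), zero_lt_one⟩)]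
      with t ht
    have h1 : f t ≤ (1 - t) * s x + t * s u := by
      have hpt : x + t • (u - x) = (1 - t) • x + t • u := by module
      have := hs.2 (Set.mem_univ x) (Set.mem_univ u)
        (by linarith [ht.2] : (0:ℝ) ≤ 1 - t) (le_of_lt ht.1) (by ring)
      rw [hf]; simp only [smul_eq_mul] at this ⊢
      rw [hpt]; exact this
    have ht0 : (0:ℝ) < t := ht.1
    rw [slope_def_field, hf0, sub_zero]
    rw [div_le_iff₀ ht0]
    nlinarith [h1]
  have := le_of_tendsto hslope hev
  linarith

lemma nids_descent (s : E → ℝ) (g : E → E) (L : ℝ) (hL : 0 < L)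
    (hg : ∀ v, HasGradientAt s (g v) v)
    (hlip : ∀ v w : E, ‖g v - g w‖ ≤ L * ‖v - w‖) (x y : E) :
    s y ≤ s x + (inner ℝ (g x) (y - x) : ℝ) + L / 2 * ‖y - x‖ ^ 2 := by
  set a : ℝ := (inner ℝ (g x) (y - x) : ℝ) with ha
  set b : ℝ := L / 2 * ‖y - x‖ ^ 2 with hb
  set F : ℝ → ℝ := fun t => s (x + t • (y - x)) - t * a - t ^ 2 * b with hF
  have hdF : ∀ t : ℝ, HasDerivAt F
      ((inner ℝ (g (x + t • (y - x))) (y - x) : ℝ) - a - 2 * t * b) t := by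
    intro t
    have h1 := nids_line_deriv s g hg x y t
    have h2 : HasDerivAt (fun t : ℝ => t * a) a t := hasDerivAt_mul_const a
    have h3 : HasDerivAt (fun t : ℝ => t ^ 2 * b) (2 * t * b) t := by
      simpa using (hasDerivAt_pow 2 t).mul_const b
    exact (h1.sub h2).sub h3
  have hanti : AntitoneOn F (Set.Icc 0 1) := by
    apply antitoneOn_of_deriv_nonpos (convex_Icc 0 1)
    · have hdiff : Differentiable ℝ F := fun t => (hdF t).differentiableAt
      exact hdiff.continuous.continuousOn
    · exact fun t _ => ((hdF t).differentiableAt).differentiableWithinAt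
    · intro t ht
      rw [interior_Icc] at ht
      rw [(hdF t).deriv]
      have hib : (inner ℝ (g (x + t • (y - x)) - g x) (y - x) : ℝ) ≤ t * L * ‖y - x‖ ^ 2 := by
        calc (inner ℝ (g (x + t • (y - x)) - g x) (y - x) : ℝ)
            ≤ ‖g (x + t • (y - x)) - g x‖ * ‖y - x‖ := real_inner_le_norm _ _
          _ ≤ (L * ‖(x + t • (y - x)) - x‖) * ‖y - x‖ := by
              apply mul_le_mul_of_nonneg_right (hlip _ _) (norm_nonneg _)
          _ = t * L * ‖y - x‖ ^ 2 := by
              rw [add_sub_cancel_left, norm_smul, Real.norm_eq_abs, abs_of_pos ht.1]; ring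
      have heq : (inner ℝ (g (x + t • (y - x))) (y - x) : ℝ) - a =
          (inner ℝ (g (x + t • (y - x)) - g x) (y - x) : ℝ) := by
        rw [inner_sub_left, ha]
      rw [heq]
      have h2b : 2 * t * b = t * L * ‖y - x‖ ^ 2 := by rw [hb]; ring
      linarith
  have h01 := hanti (Set.mem_Icc.mpr ⟨le_refl 0, zero_le_one⟩)
    (Set.mem_Icc.mpr ⟨zero_le_one, le_refl 1⟩) zero_le_one
  have hF0 : F 0 = s x := by simp [hF]
  have hF1 : F 1 = s y - a - b := by simp [hF]
  rw [hF0, hF1] at h01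
  linarith

lemma nids_coco (s : E → ℝ) (g : E → E) (L : ℝ) (hL : 0 < L)
    (hs : ConvexOn ℝ Set.univ s) (hg : ∀ v, HasGradientAt s (g v) v)
    (hlip : ∀ v w : E, ‖g v - g w‖ ≤ L * ‖v - w‖) (u w : E) :
    ‖g u - g w‖ ^ 2 / L ≤ (inner ℝ (g u - g w) (u - w) : ℝ) := by
  have half : ∀ u w : E,
      s w + (inner ℝ (g w) (u - w) : ℝ) + ‖g u - g w‖ ^ 2 / (2 * L) ≤ s u := by
    intro u w
    set δ : E := g u - g w with hδ
    set y : E := u - L⁻¹ • δ with hy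
    have h1 := nids_descent s g L hL hg hlip u y
    have h2 := nids_first_order s g hs hg w y
    have hyu : y - u = -(L⁻¹ • δ) := by rw [hy]; abel
    have hyw : y - w = (u - w) - L⁻¹ • δ := by rw [hy]; abel
    have e1 : (inner ℝ (g u) (y - u) : ℝ) = -(L⁻¹ * (inner ℝ (g u) δ : ℝ)) := by
      rw [hyu, inner_neg_right, real_inner_smul_right]
    have e2 : ‖y - u‖ ^ 2 = L⁻¹ ^ 2 * ‖δ‖ ^ 2 := by
      rw [hyu, norm_neg, norm_smul, Real.norm_eq_abs, abs_of_pos (by positivity), mul_pow]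
    have e3 : (inner ℝ (g w) (y - w) : ℝ) =
        (inner ℝ (g w) (u - w) : ℝ) - L⁻¹ * (inner ℝ (g w) δ : ℝ) := by
      rw [hyw, inner_sub_right, real_inner_smul_right]
    have e4 : (inner ℝ (g u) δ : ℝ) - (inner ℝ (g w) δ : ℝ) = ‖δ‖ ^ 2 := by
      rw [← inner_sub_left, ← hδ, real_inner_self_eq_norm_sq]
    rw [e1, e2] at h1
    rw [e3] at h2
    have hL2 : L / 2 * (L⁻¹ ^ 2 * ‖δ‖ ^ 2) = ‖δ‖ ^ 2 / (2 * L) := by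
      field_simp
    have e5 : L⁻¹ * (inner ℝ (g u) δ : ℝ) - L⁻¹ * (inner ℝ (g w) δ : ℝ) = L⁻¹ * ‖δ‖ ^ 2 := by
      rw [← mul_sub, e4]
    have hL3 : L⁻¹ * ‖δ‖ ^ 2 - ‖δ‖ ^ 2 / (2 * L) = ‖δ‖ ^ 2 / (2 * L) := by
      field_simp; ring
    linarith
  have hA := half u w
  have hB := half w u
  have hrev : ‖g w - g u‖ = ‖g u - g w‖ := norm_sub_rev _ _
  rw [hrev] at hB
  have hsum : (inner ℝ (g w) (u - w) : ℝ) + (inner ℝ (g u) (w - u) : ℝ) =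
      -(inner ℝ (g u - g w) (u - w) : ℝ) := by
    have hwu : w - u = -(u - w) := by abel
    rw [hwu, inner_neg_right, inner_sub_left]; ring
  have hLdiv : ‖g u - g w‖ ^ 2 / (2 * L) + ‖g u - g w‖ ^ 2 / (2 * L) =
      ‖g u - g w‖ ^ 2 / L := by field_simp; ring

  linarith

end Analysis

lemma gradS_apply (g : Fin n → EuclideanSpace ℝ (Fin p) → EuclideanSpace ℝ (Fin p))
    (x : Matrix (Fin n) (Fin p) ℝ) (i : Fin n) (j : Fin p) :
    gradS g x i j = g i ((WithLp.equiv 2 (Fin p → ℝ)).symm (x i)) j := by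
  simp [gradS]

lemma coco_rows {p : ℕ} (s : EuclideanSpace ℝ (Fin p) → ℝ)
    (g : EuclideanSpace ℝ (Fin p) → EuclideanSpace ℝ (Fin p)) (L : ℝ) (hL : 0 < L)
    (hs : ConvexOn ℝ Set.univ s) (hg : ∀ v, HasGradientAt s (g v) v)
    (hlip : ∀ v w, ‖g v - g w‖ ≤ L * ‖v - w‖) (a b : Fin p → ℝ) :
    (∑ j, (g ((WithLp.equiv 2 (Fin p → ℝ)).symm a) j
        - g ((WithLp.equiv 2 (Fin p → ℝ)).symm b) j) ^ 2) / L ≤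
      ∑ j, (g ((WithLp.equiv 2 (Fin p → ℝ)).symm a) j
        - g ((WithLp.equiv 2 (Fin p → ℝ)).symm b) j) * (a j - b j) := by
  have hco := nids_coco s g L hL hs hg hlip
    ((WithLp.equiv 2 (Fin p → ℝ)).symm a) ((WithLp.equiv 2 (Fin p → ℝ)).symm b)
  set u := (WithLp.equiv 2 (Fin p → ℝ)).symm a
  set w := (WithLp.equiv 2 (Fin p → ℝ)).symm b
  have e1 : (inner ℝ (g u - g w) (u - w) : ℝ) = ∑ j, (g u j - g w j) * (a j - b j) := by
    rw [PiLp.inner_apply]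
    refine Finset.sum_congr rfl fun j _ => ?_
    simp [RCLike.inner_apply, u, w]
    ring
  have e2 : ‖g u - g w‖ ^ 2 = ∑ j, (g u j - g w j) ^ 2 := by
    rw [← real_inner_self_eq_norm_sq, PiLp.inner_apply]
    refine Finset.sum_congr rfl fun j _ => ?_
    simp [RCLike.inner_apply]
  rw [e1, e2] at hco
  exact hco

lemma prox_subgrad (r : Fin n → (Fin p → ℝ) → ℝ)
    (hr : ∀ i, ConvexOn ℝ Set.univ (r i)) (α : Fin n → ℝ) (hα : ∀ i, 0 < α i)
    (z x : Matrix (Fin n) (Fin p) ℝ) (hx : ProxMin r α z x)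
    (u : Matrix (Fin n) (Fin p) ℝ) :
    rsum r x + iprod ((Matrix.diagonal fun i => (α i)⁻¹) * (z - x)) (u - x) ≤ rsum r u := by
  set Li : Matrix (Fin n) (Fin n) ℝ := Matrix.diagonal fun i => (α i)⁻¹ with hLi
  have hLiT : Liᵀ = Li := Matrix.diagonal_transpose _
  set A : ℝ := rsum r x with hA
  set U : ℝ := rsum r u with hU
  set J : ℝ := iprod (Li * (z - x)) (u - x) with hJ
  set I' : ℝ := iprodQ Li (x - z) (u - x) with hI
  set Cn : ℝ := nsq Li (u - x) with hCn
  have hCn0 : 0 ≤ Cn := nsq_diagonal_nonneg (fun i => inv_nonneg.mpr (le_of_lt (hα i))) _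
  have hJI : J = -I' := by
    rw [hJ, hI, iprodQ_eq]
    have h1 : iprod (Li * (z - x)) (u - x) = iprod (z - x) (Li * (u - x)) := by
      rw [iprod_mul_right, hLiT]
    rw [h1, show z - x = -(x - z) from by abel, iprod_comm, iprod_neg_right, iprod_comm]
  have key : ∀ t : ℝ, 0 < t → t ≤ 1 → t * (A + J - U) ≤ t ^ 2 / 2 * Cn := by
    intro t ht0 ht1
    have h1 := hx (x + t • (u - x))
    have h3 : nsq Li (x + t • (u - x) - z) =
        nsq Li (x - z) + 2 * t * I' + t ^ 2 * Cn := by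
      have he : x + t • (u - x) - z = (x - z) + t • (u - x) := by abel
      rw [he, nsq_add_smul hLiT, hI, hCn]
    have h2 : rsum r (x + t • (u - x)) ≤ (1 - t) * A + t * U := by
      unfold rsum
      rw [hA, hU]
      unfold rsum
      rw [Finset.mul_sum, Finset.mul_sum, ← Finset.sum_add_distrib]
      refine Finset.sum_le_sum fun i _ => ?_
      have hrow : (x + t • (u - x)) i = (1 - t) • (x i) + t • (u i) := by
        funext j
        simp only [Matrix.add_apply, Matrix.smul_apply, Matrix.sub_apply, Pi.add_apply,
          Pi.smul_apply, smul_eq_mul]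
        ring
      rw [hrow]
      have := (hr i).2 (Set.mem_univ (x i)) (Set.mem_univ (u i))
        (by linarith : (0:ℝ) ≤ 1 - t) (le_of_lt ht0) (by ring)
      simpa using this
    rw [h3] at h1
    have hJ' : J = -I' := hJI
    nlinarith [h1, h2]
  by_contra hcon
  push_neg at hcon
  set E : ℝ := A + J - U with hE
  have hE0 : 0 < E := by rw [hE]; linarith
  set q : ℝ := E / (Cn + 1) with hqdef
  have hq0 : 0 < q := div_pos hE0 (by linarith)
  have hq : q * (Cn + 1) = E := div_mul_cancel₀ _ (by linarith)
  set t0 : ℝ := min 1 q with ht0def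
  have ht00 : 0 < t0 := lt_min zero_lt_one hq0
  have ht01 : t0 ≤ 1 := min_le_left _ _
  have ht0q : t0 ≤ q := min_le_right _ _
  have hk := key t0 ht00 ht01
  have hq' : q * Cn = E - q := by linarith [hq]
  have h5 : t0 * Cn ≤ q * Cn := mul_le_mul_of_nonneg_right ht0q hCn0
  nlinarith [hk, h5, hq', mul_pos ht00 hq0, mul_pos ht00 hE0,
    mul_le_mul_of_nonneg_left h5 (le_of_lt ht00)]

lemma mp_symm {n : ℕ} {A B : Matrix (Fin n) (Fin n) ℝ} (hAsym : Aᵀ = A)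
    (h1 : A * B * A = A) (h2 : B * A * B = B) (h3 : (A * B)ᵀ = A * B)
    (h4 : (B * A)ᵀ = B * A) : Bᵀ = B := by
  have hab : A * B = Bᵀ * A := by rw [← h3, Matrix.transpose_mul, hAsym]
  have hba : B * A = A * Bᵀ := by rw [← h4, Matrix.transpose_mul, hAsym]
  have k1 : B = B * Bᵀ * A := by
    calc B = B * A * B := h2.symm
    _ = B * (A * B) := by rw [Matrix.mul_assoc]
    _ = B * (Bᵀ * A) := by rw [hab]
    _ = B * Bᵀ * A := by rw [Matrix.mul_assoc]
  have k2 : B = B * A * Bᵀ := by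
    calc B = B * Bᵀ * A := k1
    _ = B * Bᵀ * (A * B * A) := by rw [h1]
    _ = B * Bᵀ * A * (B * A) := by simp only [Matrix.mul_assoc]
    _ = B * (B * A) := by rw [← k1]
    _ = B * (A * Bᵀ) := by rw [hba]
    _ = B * A * Bᵀ := by rw [Matrix.mul_assoc]
  calc Bᵀ = (B * A * Bᵀ)ᵀ := by rw [← k2]
  _ = B * (B * A) := by
      rw [Matrix.transpose_mul, Matrix.transpose_transpose, h4]
  _ = B * (A * Bᵀ) := by rw [hba]
  _ = B := by rw [← Matrix.mul_assoc]; exact k2.symm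

lemma mp_baa {n : ℕ} {A B : Matrix (Fin n) (Fin n) ℝ} (hAsym : Aᵀ = A)
    (h1 : A * B * A = A) (h4 : (B * A)ᵀ = B * A) : B * A * A = A := by
  have hba : B * A = A * Bᵀ := by rw [← h4, Matrix.transpose_mul, hAsym]
  have haba : A * (Bᵀ * A) = A := by
    have := congrArg Matrix.transpose h1
    simpa [Matrix.transpose_mul, hAsym, Matrix.mul_assoc] using this
  rw [hba, Matrix.mul_assoc]
  exact haba

lemma M_psd (α : Fin n → ℝ) (hα : ∀ i, 0 < α i) (c : ℝ) (hc : 0 < c)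
    {A : Matrix (Fin n) (Fin n) ℝ} (hAsym : Aᵀ = A) (hA : A.PosSemidef)
    (hcW : ((1 : Matrix (Fin n) (Fin n) ℝ) -
      c • ((Matrix.diagonal fun i => Real.sqrt (α i)) * A *
        Matrix.diagonal fun i => Real.sqrt (α i))).PosSemidef)
    {B : Matrix (Fin n) (Fin n) ℝ} (h1 : A * B * A = A)
    (w : Matrix (Fin n) (Fin p) ℝ) :
    0 ≤ nsq (c⁻¹ • B - Matrix.diagonal α) (A * w) := by
  set Sh : Matrix (Fin n) (Fin n) ℝ := Matrix.diagonal fun i => Real.sqrt (α i) with hSh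
  set Sm : Matrix (Fin n) (Fin n) ℝ := Matrix.diagonal fun i => (Real.sqrt (α i))⁻¹ with hSm
  have hsq : ∀ i, Real.sqrt (α i) ≠ 0 := fun i => ne_of_gt (Real.sqrt_pos.mpr (hα i))
  have hShSm : Sh * Sm = 1 := by
    rw [hSh, hSm, Matrix.diagonal_mul_diagonal]
    rw [show (fun i => Real.sqrt (α i) * (Real.sqrt (α i))⁻¹) = fun _ => (1:ℝ) from
      funext fun i => mul_inv_cancel₀ (hsq i), Matrix.diagonal_one]
  have hSmSh : Sm * Sh = 1 := by
    rw [hSm, hSh, Matrix.diagonal_mul_diagonal]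
    rw [show (fun i => (Real.sqrt (α i))⁻¹ * Real.sqrt (α i)) = fun _ => (1:ℝ) from
      funext fun i => inv_mul_cancel₀ (hsq i), Matrix.diagonal_one]
  have hShSh : Sh * Sh = Matrix.diagonal α := by
    rw [hSh, Matrix.diagonal_mul_diagonal]
    exact congrArg _ (funext fun i => Real.mul_self_sqrt (le_of_lt (hα i)))
  have hShT : Shᵀ = Sh := Matrix.diagonal_transpose _
  have hSmT : Smᵀ = Sm := Matrix.diagonal_transpose _
  set T : Matrix (Fin n) (Fin n) ℝ := Sh * A * Sh with hT
  have hTpsd : T.PosSemidef := by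
    have hShH : Shᴴ = Sh := by
      rw [hSh, Matrix.diagonal_conjTranspose]
      simp
    have := hA.conjTranspose_mul_mul_same Sh
    rwa [hShH] at this
  obtain ⟨R, hRR, hRsym⟩ : ∃ R : Matrix (Fin n) (Fin n) ℝ, R * R = T ∧ Rᵀ = R := by
    open scoped MatrixOrder in
    exact ⟨CFC.sqrt T, CFC.sqrt_mul_sqrt_self T hTpsd.nonneg, by
      rw [← Matrix.conjTranspose_eq_transpose_of_trivial]
      exact (CFC.sqrt_nonneg T).posSemidef.isHermitian⟩
  set m : Matrix (Fin n) (Fin p) ℝ := A * w with hm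
  set v : Matrix (Fin n) (Fin p) ℝ := Sm * w with hv
  set u : Matrix (Fin n) (Fin p) ℝ := R * v with hu
  have hTv : T * v = Sh * m := by
    rw [hT, hv, hm]
    calc Sh * A * Sh * (Sm * w) = Sh * A * (Sh * Sm * w) := by simp only [Matrix.mul_assoc]
    _ = Sh * (A * w) := by rw [hShSm, Matrix.one_mul, Matrix.mul_assoc]
  have eA : iprod v (T * v) = iprod w m := by
    rw [hTv, hv, iprod_mul_right, hShT,
      show Sh * (Sm * w) = w from by rw [← Matrix.mul_assoc, hShSm, Matrix.one_mul]]
  have eB : iprod (T * v) (T * v) = iprod m (Matrix.diagonal α * m) := by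
    rw [hTv]
    have h9 : iprod m (Sh * (Sh * m)) = iprod (Shᵀ * m) (Sh * m) := iprod_mul_right _ _ _
    rw [hShT] at h9
    rw [← h9, ← Matrix.mul_assoc, hShSh]
  have eC : iprod v (T * v) = iprod u u := by
    rw [show T * v = R * u from by rw [hu, ← hRR, Matrix.mul_assoc]]
    rw [iprod_mul_right, hRsym, hu]
  have eD : iprod (T * v) (T * v) = iprod u (T * u) := by
    rw [show T * v = R * u from by rw [hu, ← hRR, Matrix.mul_assoc]]
    rw [iprod_mul_right, hRsym,
      show R * (R * u) = T * u from by rw [← hRR, Matrix.mul_assoc]]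
    exact iprod_comm _ _
  have ePSD : 0 ≤ iprod u u - c * iprod u (T * u) := by
    have h := psd_iprod hcW u
    rwa [Matrix.sub_mul, Matrix.one_mul, Matrix.smul_mul, iprod_sub_right,
      iprod_smul_right] at h
  have e1 : iprod m (B * m) = iprod w m := by
    rw [hm]
    have h2 : iprod (A * w) (B * (A * w)) = iprod w (Aᵀ * (B * (A * w))) := by
      have h3 := iprod_mul_right Aᵀ w (B * (A * w))
      rw [Matrix.transpose_transpose] at h3
      exact h3.symm
    rw [h2, hAsym]
    rw [show A * (B * (A * w)) = A * B * A * w from by simp only [Matrix.mul_assoc], h1]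
  have hkey : c * iprod m (Matrix.diagonal α * m) ≤ iprod w m := by
    have h7 : iprod m (Matrix.diagonal α * m) = iprod u (T * u) := by rw [← eB, eD]
    have h8 : iprod w m = iprod u u := by rw [← eA, eC]
    rw [h7, h8]
    linarith [ePSD]
  have hnsq : nsq (c⁻¹ • B - Matrix.diagonal α) m =
      c⁻¹ * iprod m (B * m) - iprod m (Matrix.diagonal α * m) := by
    unfold nsq
    rw [iprodQ_eq, Matrix.sub_mul, Matrix.smul_mul, iprod_sub_right, iprod_smul_right]
  rw [hnsq, e1]
  have h6 : c⁻¹ * (c * iprod m (Matrix.diagonal α * m)) ≤ c⁻¹ * iprod w m :=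
    mul_le_mul_of_nonneg_left hkey (inv_nonneg.mpr (le_of_lt hc))
  rw [← mul_assoc, inv_mul_cancel₀ (ne_of_gt hc), one_mul] at h6
  linarith

end NIDSAux

set_option maxHeartbeats 2000000 in
/-- Lemma 3.5: a key inequality of descent. -/
theorem nids_key_descent_inequality
    {n p : ℕ}
    (W : Matrix (Fin n) (Fin n) ℝ) (hW : IsMixing W)
    (α : Fin n → ℝ) (hα : ∀ i, 0 < α i) (c : ℝ) (hc : 0 < c)
    (hcW : ((1 : Matrix (Fin n) (Fin n) ℝ) -
      c • ((Matrix.diagonal fun i => Real.sqrt (α i)) * (1 - W) *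
        Matrix.diagonal fun i => Real.sqrt (α i))).PosDef)
    (B : Matrix (Fin n) (Fin n) ℝ) (hB : IsMoorePenrose (1 - W) B)
    (L : Fin n → ℝ) (hL : ∀ i, 0 < L i)
    (s : Fin n → EuclideanSpace ℝ (Fin p) → ℝ)
    (g : Fin n → EuclideanSpace ℝ (Fin p) → EuclideanSpace ℝ (Fin p))
    (hs : ∀ i, ConvexOn ℝ Set.univ (s i))
    (hg : ∀ i v, HasGradientAt (s i) (g i v) v)
    (hlip : ∀ i (v w : EuclideanSpace ℝ (Fin p)), ‖g i v - g i w‖ ≤ L i * ‖v - w‖)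
    (r : Fin n → (Fin p → ℝ) → ℝ) (hr : ∀ i, ConvexOn ℝ Set.univ (r i))
    (dk zk xk dk1 zk1 : Matrix (Fin n) (Fin p) ℝ)
    (hxk : ProxMin r α zk xk)
    (hdu : dk1 = dk + c • ((1 - W) *
      ((2 : ℝ) • xk - zk - Matrix.diagonal α * gradS g xk - Matrix.diagonal α * dk)))
    (hzu : zk1 = xk - Matrix.diagonal α * gradS g xk - Matrix.diagonal α * dk1)
    (hdk : InRange (1 - W) dk)
    (dstar zstar xstar : Matrix (Fin n) (Fin p) ℝ)
    (hxstar : ProxMin r α zstar xstar)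
    (hfix1 : dstar = dstar + c • ((1 - W) * ((2 : ℝ) • xstar - zstar -
      Matrix.diagonal α * gradS g xstar - Matrix.diagonal α * dstar)))
    (hfix2 : zstar = xstar - Matrix.diagonal α * gradS g xstar - Matrix.diagonal α * dstar)
    (hdstar : InRange (1 - W) dstar) :
    nsq (Matrix.diagonal fun i => (α i)⁻¹) (zk1 - zstar) +
        nsq (c⁻¹ • B - Matrix.diagonal α) (dk1 - dstar) ≤
      nsq (Matrix.diagonal fun i => (α i)⁻¹) (zk - zstar) +
        nsq (c⁻¹ • B - Matrix.diagonal α) (dk - dstar) -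
        (1 - (⨆ i, α i * L i) / 2) *
          (nsq (Matrix.diagonal fun i => (α i)⁻¹) (zk - zk1) +
            nsq (c⁻¹ • B - Matrix.diagonal α) (dk - dk1)) := by
  rcases Nat.eq_zero_or_pos n with hn0 | hn0
  · subst hn0
    have hz : ∀ (Q : Matrix (Fin 0) (Fin 0) ℝ) (x : Matrix (Fin 0) (Fin p) ℝ), nsq Q x = 0 := by
      intro Q x
      unfold nsq iprodQ Matrix.trace
      simp [Matrix.mul_apply]
    simp only [hz]
    simp
  obtain ⟨hWsym, -, -, hWpsd2⟩ := hW
  set Am : Matrix (Fin n) (Fin n) ℝ := 1 - W with hAmdef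
  set Λm : Matrix (Fin n) (Fin n) ℝ := Matrix.diagonal α with hΛdef
  set Li : Matrix (Fin n) (Fin n) ℝ := Matrix.diagonal (fun i => (α i)⁻¹) with hLidef
  set Mm : Matrix (Fin n) (Fin n) ℝ := c⁻¹ • B - Λm with hMdef
  have hAsym : Amᵀ = Am := by rw [hAmdef, Matrix.transpose_sub, Matrix.transpose_one, hWsym]
  have hApsd : Am.PosSemidef := by
    have he : (2:ℝ) • (1 : Matrix (Fin n) (Fin n) ℝ) - (W + 1) = Am := by
      rw [hAmdef, two_smul]; abel
    rwa [he] at hWpsd2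
  obtain ⟨hABA, hBAB, hABt, hBAt⟩ := hB
  have hBAA : B * Am * Am = Am := NIDSAux.mp_baa hAsym hABA hBAt
  have hBsym : Bᵀ = B := NIDSAux.mp_symm hAsym hABA hBAB hABt hBAt
  have hMsym : Mmᵀ = Mm := by
    rw [hMdef, Matrix.transpose_sub, Matrix.transpose_smul, hBsym, hΛdef,
      Matrix.diagonal_transpose]
  have hLiT : Liᵀ = Li := by rw [hLidef, Matrix.diagonal_transpose]
  have hΛT : Λmᵀ = Λm := by rw [hΛdef, Matrix.diagonal_transpose]
  have hΛLi : Λm * Li = 1 := by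
    rw [hΛdef, hLidef, Matrix.diagonal_mul_diagonal,
      show (fun i => α i * (α i)⁻¹) = fun _ => (1:ℝ) from
        funext fun i => mul_inv_cancel₀ (ne_of_gt (hα i)), Matrix.diagonal_one]
  have hLiΛ : Li * Λm = 1 := by
    rw [hLidef, hΛdef, Matrix.diagonal_mul_diagonal,
      show (fun i => (α i)⁻¹ * α i) = fun _ => (1:ℝ) from
        funext fun i => inv_mul_cancel₀ (ne_of_gt (hα i)), Matrix.diagonal_one]
  set kap : ℝ := ⨆ i, α i * L i with hkdef
  have hκi : ∀ i, α i * L i ≤ kap := by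
    intro i
    rw [hkdef]
    exact le_ciSup (f := fun i => α i * L i) (Set.Finite.bddAbove (Set.finite_range _)) i
  have hκpos : 0 < kap :=
    lt_of_lt_of_le (mul_pos (hα ⟨0, hn0⟩) (hL ⟨0, hn0⟩)) (hκi ⟨0, hn0⟩)
  set Gm := gradS g xk - gradS g xstar with hGdef
  set Xm := xk - xstar with hXdef
  set Qm := Li * (zk - xk - (zstar - xstar)) with hQdef
  set Zp := zk1 - zstar with hZpdef
  set Zd := zk - zk1 with hZddef
  set Dp := dk1 - dstar with hDpdef
  set Dd := dk - dk1 with hDddef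
  set ak := (2:ℝ) • xk - zk - Λm * gradS g xk - Λm * dk with hakdef
  set as' := (2:ℝ) • xstar - zstar - Λm * gradS g xstar - Λm * dstar with hasdef
  clear_value Am Λm Li Mm kap Gm Xm Qm Zp Zd Dp Dd ak as'
  -- matrix identities
  have hΛQ : Λm * Qm = zk - xk - (zstar - xstar) := by
    rw [hQdef, ← Matrix.mul_assoc, hΛLi, Matrix.one_mul]
  have hZpX : Zp = Xm - Λm * Gm - Λm * Dp := by
    rw [hZpdef, hXdef, hGdef, hDpdef, hzu, hfix2]
    simp only [Matrix.mul_sub]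
    abel
  have hZd : Zd = Λm * Qm + (Λm * Gm + Λm * Dp) := by
    have e : Λm * Gm + Λm * Dp = Xm - Zp := by rw [hZpX]; abel
    rw [hZddef, hΛQ, e, hXdef, hZpdef]
    abel
  have collapse : ∀ m : Matrix (Fin n) (Fin p) ℝ, Li * (Λm * m) = m := by
    intro m
    rw [← Matrix.mul_assoc, hLiΛ, Matrix.one_mul]
  have hLiZd : Li * Zd = Qm + (Gm + Dp) := by
    rw [hZd, Matrix.mul_add, Matrix.mul_add, collapse, collapse, collapse]
  have hAas : Am * as' = 0 := by
    have h0 : c • (Am * as') = 0 := left_eq_add.mp hfix1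
    rcases smul_eq_zero.mp h0 with h | h
    · exact absurd h (ne_of_gt hc)
    · exact h
  have hDdA : Dd = Am * ((-c) • ak) := by
    rw [hDddef, hdu, Matrix.mul_smul, neg_smul]
    abel
  obtain ⟨y1, hy1⟩ := hdk
  obtain ⟨y2, hy2⟩ := hdstar
  have hDpA : ∃ y : Matrix (Fin n) (Fin p) ℝ, Dp = Am * y := by
    refine ⟨y1 + c • ak - y2, ?_⟩
    rw [hDpdef, hdu, Matrix.mul_sub, Matrix.mul_add, Matrix.mul_smul, ← hy1, ← hy2]
  obtain ⟨yp, hyp⟩ := hDpA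
  have hBADp : B * Am * Dp = Dp := by
    rw [hyp, ← Matrix.mul_assoc, hBAA]
  have hYraw : ak - as' = Zp - Λm * Qm - Λm * Dd := by
    rw [hakdef, hasdef, hΛQ, hZpdef, hDddef, hzu, hfix2]
    simp only [Matrix.mul_sub]
    module
  -- scalar identities
  have hsZZ : iprodQ Li Zp Zd = iprod Zp Qm + (iprod Zp Gm + iprod Zp Dp) := by
    rw [NIDSAux.iprodQ_eq, hLiZd, NIDSAux.iprod_add_right, NIDSAux.iprod_add_right]
  have hc0 : c ≠ 0 := ne_of_gt hc
  have t1 : iprodQ Mm Dp Dd = c⁻¹ * iprod Dp (B * Dd) - iprod Dp (Λm * Dd) := by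
    rw [hMdef, NIDSAux.iprodQ_eq, Matrix.sub_mul, Matrix.smul_mul,
      NIDSAux.iprod_sub_right, NIDSAux.iprod_smul_right]
  have e2 : iprod Dp as' = 0 := by
    rw [hyp]
    have h3 := NIDSAux.iprod_mul_right Amᵀ yp as'
    rw [Matrix.transpose_transpose] at h3
    rw [← h3, hAsym, hAas, NIDSAux.iprod_zero_right]
  have t2 : iprod Dp (B * Dd) = -c * iprod Dp (ak - as') := by
    rw [hDdA, ← Matrix.mul_assoc, NIDSAux.iprod_mul_right, hBAt, hBADp,
      NIDSAux.iprod_smul_right, NIDSAux.iprod_sub_right, e2]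
    ring
  have t3 : iprod Dp (ak - as') =
      iprod Dp Zp - iprod Dp (Λm * Qm) - iprod Dp (Λm * Dd) := by
    rw [hYraw, NIDSAux.iprod_sub_right, NIDSAux.iprod_sub_right]
  have hsDD : iprodQ Mm Dp Dd = iprod Dp (Λm * Qm) - iprod Dp Zp := by
    rw [t1, t2, t3]
    field_simp
    ring
  have swap : ∀ (N : Matrix (Fin n) (Fin n) ℝ), Nᵀ = N →
      ∀ (x y : Matrix (Fin n) (Fin p) ℝ), iprod x (N * y) = iprod (N * x) y := by
    intro N hN x y
    rw [NIDSAux.iprod_mul_right, hN]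
  have E3 : iprod Zp Dp = iprod Dp Zp := NIDSAux.iprod_comm _ _
  have E4 : iprod Zp Qm = iprod Xm Qm - iprod (Λm * Gm) Qm - iprod (Λm * Dp) Qm := by
    rw [hZpX, NIDSAux.iprod_sub_left, NIDSAux.iprod_sub_left]
  have E5 : iprod Zp Gm = iprod Xm Gm - iprod (Λm * Gm) Gm - iprod (Λm * Dp) Gm := by
    rw [hZpX, NIDSAux.iprod_sub_left, NIDSAux.iprod_sub_left]
  have E6 : iprod Dp (Λm * Qm) = iprod (Λm * Dp) Qm := swap Λm hΛT _ _
  have E7 : iprod Gm Zd = iprod (Λm * Gm) Qm + (iprod (Λm * Gm) Gm + iprod (Λm * Gm) Dp) := by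
    rw [hZd, NIDSAux.iprod_add_right, NIDSAux.iprod_add_right, swap Λm hΛT,
      swap Λm hΛT, swap Λm hΛT]
  have E8 : iprod (Λm * Dp) Gm = iprod (Λm * Gm) Dp := by
    rw [← swap Λm hΛT Dp Gm]
    exact NIDSAux.iprod_comm _ _
  have hS : iprodQ Li Zp Zd + iprodQ Mm Dp Dd =
      iprod Xm Qm + iprod Xm Gm - iprod Gm Zd := by
    rw [hsZZ, hsDD]
    linarith [E3, E4, E5, E6, E7, E8]
  -- inequalities
  have h1 := NIDSAux.prox_subgrad r hr α hα zk xk hxk xstar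
  have h2 := NIDSAux.prox_subgrad r hr α hα zstar xstar hxstar xk
  have P1 : 0 ≤ iprod Xm Qm := by
    have e3 : xstar - xk = -(xk - xstar) := by abel
    rw [e3, NIDSAux.iprod_neg_right] at h1
    have e4 : iprod Xm Qm =
        iprod ((Matrix.diagonal fun i => (α i)⁻¹) * (zk - xk)) (xk - xstar)
          - iprod ((Matrix.diagonal fun i => (α i)⁻¹) * (zstar - xstar)) (xk - xstar) := by
      rw [hXdef, hQdef, hLidef, Matrix.mul_sub, NIDSAux.iprod_sub_right,
        NIDSAux.iprod_comm (xk - xstar) _, NIDSAux.iprod_comm (xk - xstar) _]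
    linarith [h1, h2, e4]
  have P2 : nsq Λm Gm / kap ≤ iprod Xm Gm := by
    rw [hΛdef, NIDSAux.nsq_diagonal, NIDSAux.iprod_def, Finset.sum_div]
    refine Finset.sum_le_sum fun i _ => ?_
    have hrow := NIDSAux.coco_rows (s i) (g i) (L i) (hL i) (hs i) (hg i)
      (fun v w => hlip i v w) (xk i) (xstar i)
    set ui := (WithLp.equiv 2 (Fin p → ℝ)).symm (xk i) with hui
    set wi := (WithLp.equiv 2 (Fin p → ℝ)).symm (xstar i) with hwi
    have hGe : ∀ j, Gm i j = g i ui j - g i wi j := by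
      intro j
      rw [hGdef, Matrix.sub_apply, NIDSAux.gradS_apply, NIDSAux.gradS_apply, ← hui, ← hwi]
    have h6 : ∑ j, Xm i j * Gm i j = ∑ j, (g i ui j - g i wi j) * (xk i j - xstar i j) := by
      refine Finset.sum_congr rfl fun j _ => ?_
      rw [hGe j, hXdef, Matrix.sub_apply]
      ring
    have h7 : ∑ j, Gm i j ^ 2 = ∑ j, (g i ui j - g i wi j) ^ 2 := by
      refine Finset.sum_congr rfl fun j _ => ?_
      rw [hGe j]
    rw [h6, h7]
    set S2 := ∑ j, (g i ui j - g i wi j) ^ 2 with hS2def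
    set S1 := ∑ j, (g i ui j - g i wi j) * (xk i j - xstar i j) with hS1def
    clear_value S1 S2
    have hS2 : 0 ≤ S2 := by
      rw [hS2def]
      exact Finset.sum_nonneg fun j _ => sq_nonneg _
    have h8 : α i * S2 / kap ≤ S2 / L i := by
      rw [div_le_div_iff₀ hκpos (hL i)]
      nlinarith [mul_nonneg (sub_nonneg.mpr (hκi i)) hS2, hL i, hα i]
    linarith [hrow, h8]
  have P3 : iprod Gm Zd ≤ nsq Λm Gm / kap + kap / 4 * nsq Li Zd := by
    rw [hΛdef, hLidef, NIDSAux.nsq_diagonal, NIDSAux.nsq_diagonal, NIDSAux.iprod_def,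
      Finset.sum_div, Finset.mul_sum, ← Finset.sum_add_distrib]
    refine Finset.sum_le_sum fun i _ => ?_
    have e1 : α i * (∑ j, Gm i j ^ 2) / kap = ∑ j, α i * Gm i j ^ 2 / kap := by
      rw [Finset.mul_sum, Finset.sum_div]
    have e2 : kap / 4 * ((α i)⁻¹ * ∑ j, Zd i j ^ 2) =
        ∑ j, kap / 4 * ((α i)⁻¹ * Zd i j ^ 2) := by
      rw [Finset.mul_sum, Finset.mul_sum]
    rw [e1, e2, ← Finset.sum_add_distrib]
    refine Finset.sum_le_sum fun j _ => ?_
    have htpos : (0:ℝ) < 2 * α i / kap :=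
      div_pos (by linarith [hα i]) hκpos
    have hy := NIDSAux.young (2 * α i / kap) (Gm i j) (Zd i j) htpos
    have einv : (2 * α i / kap)⁻¹ = kap / (2 * α i) := by rw [inv_div]
    rw [einv] at hy
    have e3 : 2 * α i / kap * Gm i j ^ 2 = 2 * (α i * Gm i j ^ 2 / kap) := by ring
    have e4 : kap / (2 * α i) * Zd i j ^ 2 = 2 * (kap / 4 * ((α i)⁻¹ * Zd i j ^ 2)) := by
      have hαi : α i ≠ 0 := ne_of_gt (hα i)
      field_simp
      ring
    linarith
  have P4 : 0 ≤ nsq Mm Dd := by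
    rw [hDdA, hMdef, hΛdef]
    exact NIDSAux.M_psd α hα c hc hAsym hApsd hcW.posSemidef hABA ((-c) • ak)
  have P4' : 0 ≤ kap / 2 * nsq Mm Dd := mul_nonneg (by positivity) P4
  have P5 : 0 ≤ nsq Li Zd := by
    rw [hLidef]
    exact NIDSAux.nsq_diagonal_nonneg (fun i => inv_nonneg.mpr (le_of_lt (hα i))) _
  -- conclude
  have hgz : zk - zstar = Zp + Zd := by rw [hZpdef, hZddef]; abel
  have hgd : dk - dstar = Dp + Dd := by rw [hDpdef, hDddef]; abel
  rw [hgz, hgd, NIDSAux.nsq_add hLiT, NIDSAux.nsq_add hMsym]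
  have hexp : (1 - kap / 2) * (nsq Li Zd + nsq Mm Dd) =
      nsq Li Zd + nsq Mm Dd - kap / 2 * nsq Li Zd - kap / 2 * nsq Mm Dd := by ring
  linarith [hS, P1, P2, P3, P4', P5, hexp]
end

section
/- (Key identity (3.15) in the proof of Lemma 3.4.) Suppose d^k, d^{k+1}, z^k, z^{k+1}, x^k, d*, z*, x* ∈ ℝ^{n×p} satisfy: d^{k+1} = d^k + c(I − W)(2x^k − z^k − Λ∇s(x^k) − Λ d^k); z^{k+1} = x^k − Λ∇s(x^k) − Λ d^{k+1}; d^k, d* ∈ range(I − W); (I − W)x* = 0; and z* = x* − Λ∇s(x*) − Λ d*. Then ⟨d^{k+1} − d*, z^{k+1} − z^k + x^k − x*⟩ = ⟨d^{k+1} − d*, d^{k+1} − d^k⟩_M, where M = c⁻¹(I − W)† − Λ. -/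
open Matrix Filter Topology

/-- Key identity (3.15) in the proof of Lemma 3.4. -/
theorem nids_key_identity
    {n p : ℕ}
    (W : Matrix (Fin n) (Fin n) ℝ) (hW : IsMixing W)
    (α : Fin n → ℝ) (hα : ∀ i, 0 < α i) (c : ℝ) (hc : 0 < c)
    (B : Matrix (Fin n) (Fin n) ℝ) (hB : IsMoorePenrose (1 - W) B)
    (s : Fin n → EuclideanSpace ℝ (Fin p) → ℝ)
    (g : Fin n → EuclideanSpace ℝ (Fin p) → EuclideanSpace ℝ (Fin p))
    (hg : ∀ i v, HasGradientAt (s i) (g i v) v)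
    (dk dk1 zk zk1 xk dstar zstar xstar : Matrix (Fin n) (Fin p) ℝ)
    (hdu : dk1 = dk + c • ((1 - W) *
      ((2 : ℝ) • xk - zk - Matrix.diagonal α * gradS g xk - Matrix.diagonal α * dk)))
    (hzu : zk1 = xk - Matrix.diagonal α * gradS g xk - Matrix.diagonal α * dk1)
    (hdk : InRange (1 - W) dk) (hdstar : InRange (1 - W) dstar)
    (hxs : (1 - W) * xstar = 0)
    (hzs : zstar = xstar - Matrix.diagonal α * gradS g xstar - Matrix.diagonal α * dstar) :
    iprod (dk1 - dstar) (zk1 - zk + xk - xstar) =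
      iprodQ (c⁻¹ • B - Matrix.diagonal α) (dk1 - dstar) (dk1 - dk) := by
  obtain ⟨hWT, -, -, -⟩ := hW
  obtain ⟨hABA, -, -, -⟩ := hB
  set A : Matrix (Fin n) (Fin n) ℝ := 1 - W with hA
  have hAT : Aᵀ = A := by
    simp [hA, Matrix.transpose_sub, hWT]
  set L : Matrix (Fin n) (Fin n) ℝ := Matrix.diagonal α with hL
  set V : Matrix (Fin n) (Fin p) ℝ := (2 : ℝ) • xk - zk - L * gradS g xk - L * dk with hV
  obtain ⟨y1, hy1⟩ := hdk
  obtain ⟨y2, hy2⟩ := hdstar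
  clear_value A L V
  have hw : dk1 - dk = A * (c • V) := by
    rw [hdu, Matrix.mul_smul]; abel
  have hu : dk1 - dstar = A * (y1 + c • V - y2) := by
    rw [Matrix.mul_sub, Matrix.mul_add, ← hy1, ← hy2, Matrix.mul_smul, hdu]
  have hAV : A * V = c⁻¹ • (dk1 - dk) := by
    rw [hw, Matrix.mul_smul, smul_smul, inv_mul_cancel₀ hc.ne', one_smul]
  have hz : zk1 - zk + xk = V - L * (dk1 - dk) := by
    rw [hzu, hV, Matrix.mul_sub]
    simp only [two_smul]
    abel
  have heq : A * (zk1 - zk + xk) = c⁻¹ • (dk1 - dk) - A * (L * (dk1 - dk)) := by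
    rw [hz, Matrix.mul_sub, hAV]
  have key : A * ((c⁻¹ • B - L) * (dk1 - dk)) =
      c⁻¹ • (dk1 - dk) - A * (L * (dk1 - dk)) := by
    rw [Matrix.sub_mul, Matrix.mul_sub, Matrix.smul_mul, Matrix.mul_smul]
    congr 1
    rw [hw, show A * (B * (A * (c • V))) = (A * B * A) * (c • V) by
      simp only [Matrix.mul_assoc], hABA]
  simp only [iprod, iprodQ]
  rw [hu, Matrix.transpose_mul, hAT,
    Matrix.mul_assoc ((y1 + c • V - y2)ᵀ) A (zk1 - zk + xk - xstar),
    Matrix.mul_sub A (zk1 - zk + xk) xstar, hxs, sub_zero, heq,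
    show (y1 + c • V - y2)ᵀ * A * (c⁻¹ • B - L) * (dk1 - dk) =
      (y1 + c • V - y2)ᵀ * (A * ((c⁻¹ • B - L) * (dk1 - dk))) by
        simp only [Matrix.mul_assoc], key]
end
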